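/- arXiv:1212.0103 — 6 statements merged into one kernel-verified Lean document; each statement's English description precedes it below -/
import Mathlib

section
/- Let n > 2 and let a_1, ..., a_n be integers satisfying n·(a_1 + ... + a_n)^2 = 2(n+1)·∑_{1 ≤ k < ℓ ≤ n} a_k a_ℓ. Then a_1 = a_2 = ... = a_n = 0. -/
open Finset in
lemma sq_sum_expand (n : ℕ) (a : Fin n → ℤ) :
    (∑ i, a i) ^ 2 = (∑ i, (a i) ^ 2) + 2 * ∑ k, ∑ l ∈ Finset.Ioi k, a k * a l := by
  have inner : ∀ k : Fin n, ∑ l, a k * a l =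
      (∑ l ∈ Iio k, a k * a l) + (a k * a k + ∑ l ∈ Ioi k, a k * a l) := by
    intro k
    rw [show (univ : Finset (Fin n)) = Iio k ∪ Ici k by ext x; simp [lt_or_ge x k],
      sum_union (by simp [disjoint_left]), Ici_eq_cons_Ioi, sum_cons]
  have swap : (∑ k, ∑ l ∈ Iio k, a k * a l) = ∑ k, ∑ l ∈ Ioi k, a k * a l := by
    rw [sum_comm' (t' := univ) (s' := fun l => Ioi l) (by simp [mem_Iio, mem_Ioi])]
    simp_rw [mul_comm]
  rw [sq, Finset.sum_mul_sum]
  simp_rw [inner]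
  rw [Finset.sum_add_distrib, Finset.sum_add_distrib, swap]
  ring_nf

theorem stmt_1 (n : ℕ) (hn : 2 < n) (a : Fin n → ℤ)
    (h : (n : ℤ) * (∑ i, a i) ^ 2 =
      2 * ((n : ℤ) + 1) * ∑ k, ∑ l ∈ Finset.Ioi k, a k * a l) :
    ∀ i, a i = 0 := by
  have key := sq_sum_expand n a
  -- S² = Q + 2T, nS² = (n+1)·2T = (n+1)(S² - Q) ⇒ S² = (n+1)Q
  have hS : (∑ i, a i) ^ 2 = ((n : ℤ) + 1) * ∑ i, (a i) ^ 2 := by nlinarith [key, h]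
  have cs : (∑ i, a i) ^ 2 ≤ (n : ℤ) * ∑ i, (a i) ^ 2 := by
    have := sq_sum_le_card_mul_sum_sq (s := (Finset.univ : Finset (Fin n))) (f := a)
    simpa using this
  have hQ : (∑ i, (a i) ^ 2) ≤ 0 := by nlinarith
  have hQ0 : (∑ i, (a i) ^ 2) = 0 :=
    le_antisymm hQ (Finset.sum_nonneg fun i _ => sq_nonneg _)
  intro i
  have := (Finset.sum_eq_zero_iff_of_nonneg (fun i _ => sq_nonneg (a i))).mp hQ0 i
    (Finset.mem_univ i)
  exact pow_eq_zero_iff (by norm_num) |>.mp this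
end

section
/- There is no ring isomorphism between ℤ[x,y]/⟨x³, y⁴ + x y³⟩ and ℤ[X,Y]/⟨X³, Y⁴ + 2XY³⟩ that is a graded ring isomorphism (i.e., induced by an invertible integer linear change of the degree-2 generators x, y ↦ αX + βY, γX + δY with αδ − βγ = ±1). -/
open MvPolynomial

/-- `R = ℤ[x,y]/⟨x³, y⁴ + x y³⟩`, the integral cohomology ring of `P(ℂ³⊕ξ)`. -/
noncomputable def RB : Type :=
  MvPolynomial (Fin 2) ℤ ⧸
    Ideal.span ({(X 0) ^ 3, (X 1) ^ 4 + X 0 * (X 1) ^ 3} :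
      Set (MvPolynomial (Fin 2) ℤ))

/-- `R' = ℤ[X,Y]/⟨X³, Y⁴ + 2XY³⟩`, the integral cohomology ring of `P(ℂ³⊕ξ^⊗2)`. -/
noncomputable def RB' : Type :=
  MvPolynomial (Fin 2) ℤ ⧸
    Ideal.span ({(X 0) ^ 3, (X 1) ^ 4 + 2 * X 0 * (X 1) ^ 3} :
      Set (MvPolynomial (Fin 2) ℤ))

noncomputable instance : CommRing RB := Ideal.Quotient.commRing _
noncomputable instance : CommRing RB' := Ideal.Quotient.commRing _

noncomputable def xR : Fin 2 → RB := fun i => Ideal.Quotient.mk _ (X i)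
noncomputable def xR' : Fin 2 → RB' := fun i => Ideal.Quotient.mk _ (X i)

/-! ### Auxiliary machinery -/

/-- The quotient map onto `RB`. -/
noncomputable def mkB : MvPolynomial (Fin 2) ℤ →+* RB :=
  Ideal.Quotient.mk (Ideal.span ({(X 0) ^ 3, (X 1) ^ 4 + X 0 * (X 1) ^ 3} :
      Set (MvPolynomial (Fin 2) ℤ)))

/-- The quotient map onto `RB'`. -/
noncomputable def mkB' : MvPolynomial (Fin 2) ℤ →+* RB' :=
  Ideal.Quotient.mk (Ideal.span ({(X 0) ^ 3, (X 1) ^ 4 + 2 * X 0 * (X 1) ^ 3} :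
      Set (MvPolynomial (Fin 2) ℤ)))

lemma xR_eq (i : Fin 2) : xR i = mkB (X i) := rfl
lemma xR'_eq (i : Fin 2) : xR' i = mkB' (X i) := rfl

lemma smul_xR' (n : ℤ) (i : Fin 2) : n • xR' i = mkB' (C n * X i) := by
  rw [map_mul, zsmul_eq_mul, xR'_eq]
  have : (C n : MvPolynomial (Fin 2) ℤ) = (n : MvPolynomial (Fin 2) ℤ) := by simp
  rw [this, map_intCast]

lemma cast_eq_C (n : ℤ) : (n : MvPolynomial (Fin 2) ℤ) = C n := by
  simp

lemma X_def' (i : Fin 2) : (X i : MvPolynomial (Fin 2) ℤ) = monomial (Finsupp.single i 1) 1 := by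
  rw [← X_pow_eq_monomial, pow_one]

lemma ofNat_eq_C (n : ℕ) [n.AtLeastTwo] :
    (OfNat.ofNat n : MvPolynomial (Fin 2) ℤ) = monomial 0 (OfNat.ofNat n) := by
  simp [← C_apply]

lemma gens_as_monomial :
    ((X 1) ^ 4 + 2 * X 0 * (X 1) ^ 3 : MvPolynomial (Fin 2) ℤ)
      = monomial (Finsupp.single 1 4) 1
        + monomial (Finsupp.single 0 1 + Finsupp.single 1 3) 2 := by
  rw [X_pow_eq_monomial, X_pow_eq_monomial,
    show (2 : MvPolynomial (Fin 2) ℤ) = C 2 by norm_num, X_def' 0,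
    C_mul_monomial, monomial_mul]
  norm_num

/-- Coefficient facts for elements of the ideal `⟨X³, Y⁴ + 2XY³⟩`. -/
lemma mem_facts {p : MvPolynomial (Fin 2) ℤ}
    (hp : p ∈ Ideal.span ({(X 0) ^ 3, (X 1) ^ 4 + 2 * X 0 * (X 1) ^ 3} :
      Set (MvPolynomial (Fin 2) ℤ))) :
    coeff (Finsupp.single 1 3) p = 0 ∧
    coeff (Finsupp.single 0 2 + Finsupp.single 1 2) p = 0 ∧
    coeff (Finsupp.single 0 1 + Finsupp.single 1 3) p
      = 2 * coeff (Finsupp.single 1 4) p := by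
  rw [Ideal.mem_span_pair] at hp
  obtain ⟨f, g, rfl⟩ := hp
  rw [gens_as_monomial]
  simp only [mul_add, coeff_add, X_pow_eq_monomial, coeff_mul_monomial']
  norm_num [Finsupp.le_def, Finsupp.single_apply, Finsupp.add_apply, Fin.forall_fin_two]
  ring

lemma coeff_cube (a b : ℤ) :
    MvPolynomial.coeff (Finsupp.single 1 3)
      ((C a * X 0 + C b * X 1 : MvPolynomial (Fin 2) ℤ) ^ 3) = b ^ 3 := by
  ring_nf
  simp only [cast_eq_C, X_def', C_apply, ofNat_eq_C, monomial_pow, monomial_mul,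
    coeff_add, coeff_monomial, Finsupp.smul_single, smul_zero, smul_eq_mul]
  norm_num [Finsupp.ext_iff, Fin.forall_fin_two, Finsupp.single_apply, Finsupp.add_apply]

lemma coeff_P1 (a b g d : ℤ) :
    MvPolynomial.coeff (Finsupp.single 0 2 + Finsupp.single 1 2)
      ((C g * X 0 + C d * X 1) ^ 4 + (C a * X 0 + C b * X 1) * (C g * X 0 + C d * X 1) ^ 3
        : MvPolynomial (Fin 2) ℤ) = 6 * g ^ 2 * d ^ 2 + 3 * a * g * d ^ 2 + 3 * b * g ^ 2 * d := by
  ring_nf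
  simp only [cast_eq_C, X_def', C_apply, ofNat_eq_C, monomial_pow, monomial_mul,
    coeff_add, coeff_monomial, Finsupp.smul_single, smul_zero, smul_eq_mul]
  norm_num [Finsupp.ext_iff, Fin.forall_fin_two, Finsupp.single_apply, Finsupp.add_apply]

lemma coeff_P2 (a b g d : ℤ) :
    MvPolynomial.coeff (Finsupp.single 0 1 + Finsupp.single 1 3)
      ((C g * X 0 + C d * X 1) ^ 4 + (C a * X 0 + C b * X 1) * (C g * X 0 + C d * X 1) ^ 3
        : MvPolynomial (Fin 2) ℤ) = 4 * g * d ^ 3 + a * d ^ 3 + 3 * b * g * d ^ 2 := by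
  ring_nf
  simp only [cast_eq_C, X_def', C_apply, ofNat_eq_C, monomial_pow, monomial_mul,
    coeff_add, coeff_monomial, Finsupp.smul_single, smul_zero, smul_eq_mul]
  norm_num [Finsupp.ext_iff, Fin.forall_fin_two, Finsupp.single_apply, Finsupp.add_apply]

lemma coeff_P3 (a b g d : ℤ) :
    MvPolynomial.coeff (Finsupp.single 1 4)
      ((C g * X 0 + C d * X 1) ^ 4 + (C a * X 0 + C b * X 1) * (C g * X 0 + C d * X 1) ^ 3
        : MvPolynomial (Fin 2) ℤ) = d ^ 4 + b * d ^ 3 := by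
  ring_nf
  simp only [cast_eq_C, X_def', C_apply, ofNat_eq_C, monomial_pow, monomial_mul,
    coeff_add, coeff_monomial, Finsupp.smul_single, smul_zero, smul_eq_mul]
  norm_num [Finsupp.ext_iff, Fin.forall_fin_two, Finsupp.single_apply, Finsupp.add_apply]

/-- There is no graded ring isomorphism `R ≅ R'`, i.e. no ring isomorphism sending the
degree-two generators `x, y` to `αX + βY, γX + δY` with `αδ - βγ = ±1`. -/
theorem stmt_3 :
    ¬ ∃ (φ : RB ≃+* RB') (α β γ δ : ℤ),
      (α * δ - β * γ = 1 ∨ α * δ - β * γ = -1) ∧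
      φ (xR 0) = α • xR' 0 + β • xR' 1 ∧
      φ (xR 1) = γ • xR' 0 + δ • xR' 1 := by
  rintro ⟨φ, α, β, γ, δ, hdet, h0, h1⟩
  rw [smul_xR', smul_xR', ← map_add] at h0 h1
  -- the relation `x³ = 0` transfers
  have hx3 : (xR 0) ^ 3 = 0 := by
    rw [xR_eq, ← map_pow]
    exact Ideal.Quotient.eq_zero_iff_mem.2
      (Ideal.subset_span (Set.mem_insert _ _))
  have hQ0 : mkB' ((C α * X 0 + C β * X 1) ^ 3) = 0 := by
    rw [map_pow, ← h0, ← map_pow, hx3, map_zero]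
  have hQmem := Ideal.Quotient.eq_zero_iff_mem.1 hQ0
  have hβ3 : β ^ 3 = 0 := by
    rw [← coeff_cube α β]
    exact (mem_facts hQmem).1
  have hβ : β = 0 := by
    have := pow_eq_zero_iff (n := 3) (by norm_num) |>.1 hβ3
    exact this
  subst hβ
  -- the relation `y⁴ + x y³ = 0` transfers
  have hy : (xR 1) ^ 4 + (xR 0) * (xR 1) ^ 3 = 0 := by
    rw [xR_eq, xR_eq, ← map_pow, ← map_pow, ← map_mul, ← map_add]
    exact Ideal.Quotient.eq_zero_iff_mem.2
      (Ideal.subset_span (Set.mem_insert_of_mem _ rfl))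
  have hP0 : mkB' ((C γ * X 0 + C δ * X 1) ^ 4
      + (C α * X 0 + C (0:ℤ) * X 1) * (C γ * X 0 + C δ * X 1) ^ 3) = 0 := by
    rw [map_add, map_pow, map_mul, map_pow, ← h0, ← h1, ← map_pow, ← map_pow, ← map_mul,
      ← map_add, hy, map_zero]
  have hPmem := Ideal.Quotient.eq_zero_iff_mem.1 hP0
  obtain ⟨-, hE1, hE2⟩ := mem_facts hPmem
  rw [coeff_P1] at hE1
  rw [coeff_P2, coeff_P3] at hE2
  -- now pure integer arithmetic
  have hα : α = 1 ∨ α = -1 := by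
    rcases hdet with h | h
    · exact Int.isUnit_iff.1 (IsUnit.of_mul_eq_one (a := α) δ (by linarith))
    · exact Int.isUnit_iff.1 (IsUnit.of_mul_eq_one (a := α) (-δ) (by linarith))
  have hδ : δ ≠ 0 := by
    rintro rfl
    rcases hdet with h | h <;> omega
  have hδ2 : δ ^ 2 ≠ 0 := pow_ne_zero _ hδ
  have hδ3 : δ ^ 3 ≠ 0 := pow_ne_zero _ hδ
  have hE1' : γ * (2 * γ + α) = 0 := by
    have h : δ ^ 2 * (3 * (γ * (2 * γ + α))) = 0 := by ring_nf; ring_nf at hE1; linarith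
    have := (mul_eq_zero.1 h).resolve_left hδ2
    omega
  have hE2' : 4 * γ + α - 2 * δ = 0 := by
    have h : δ ^ 3 * (4 * γ + α - 2 * δ) = 0 := by ring_nf; ring_nf at hE2; linarith
    exact (mul_eq_zero.1 h).resolve_left hδ3
  rcases mul_eq_zero.1 hE1' with h | h <;> omega
end

section
/- Let R = ℚ[x_1,...,x_h]/I where I is generated by the elements x_i·∏_{j=1}^{n_i}(x_i + ∑_{k<i} a^i_{jk} x_k) for i = 1,...,h. If for each i the Chern class relations (n_i+1)^k c_k(ξ_i) = C(n_i+1, k) c_1(ξ_i)^k hold for k = 1,...,n_i+1 (where c_k(ξ_i) is the k-th elementary symmetric polynomial in the linear forms ∑_k a^i_{jk} x_k, j = 1,...,n_i), then the elements z_i = x_i + c_1(ξ_i)/(n_i+1) satisfy z_i^{n_i+1} = 0 in R and generate R, so R ≅ ℚ[y_1,...,y_h]/⟨y_i^{n_i+1}⟩. -/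
open MvPolynomial

/-- The defining ideal of the rational cohomology ring of a generalized Bott manifold. -/
noncomputable def genBottIdeal (h : ℕ) (n : Fin h → ℕ)
    (a : (i : Fin h) → Fin (n i) → Fin h → ℚ) :
    Ideal (MvPolynomial (Fin h) ℚ) :=
  Ideal.span (Set.range fun i : Fin h =>
    X i * ∏ j : Fin (n i), ((∑ k : Fin h, C (a i j k) * X k) + X i))

/-- `c_k(ξ_i)`: the `k`-th elementary symmetric polynomial in the linear forms
`∑_{k'} a^i_{j k'} x_{k'}`, `j = 1,…,n_i`. -/
noncomputable def chern (h : ℕ) (n : Fin h → ℕ)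
    (a : (i : Fin h) → Fin (n i) → Fin h → ℚ) (i : Fin h) (k : ℕ) :
    MvPolynomial (Fin h) ℚ :=
  ∑ s ∈ Finset.powersetCard k (Finset.univ : Finset (Fin (n i))),
    ∏ j ∈ s, (∑ k' : Fin h, C (a i j k') * X k')

section aux

variable (h : ℕ) (n : Fin h → ℕ) (a : (i : Fin h) → Fin (n i) → Fin h → ℚ)

/-- the generator `g_i` of the Bott ideal -/
noncomputable def gp (i : Fin h) : MvPolynomial (Fin h) ℚ :=
  X i * ∏ j : Fin (n i), ((∑ k : Fin h, C (a i j k) * X k) + X i)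

lemma genBottIdeal_eq : genBottIdeal h n a = Ideal.span (Set.range (gp h n a)) := rfl

/-- the element `z_i` -/
noncomputable def Zp (i : Fin h) : MvPolynomial (Fin h) ℚ :=
  X i + C (((n i : ℚ) + 1)⁻¹) * chern h n a i 1

lemma chern_zero (i : Fin h) : chern h n a i 0 = 1 := by
  simp [chern]

lemma chern_top (i : Fin h) : chern h n a i (n i + 1) = 0 := by
  rw [chern, Finset.powersetCard_eq_empty.mpr (by simp), Finset.sum_empty]

lemma chern_one (i : Fin h) :
    chern h n a i 1 = ∑ j : Fin (n i), ∑ k' : Fin h, C (a i j k') * X k' := by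
  rw [chern, Finset.powersetCard_one, Finset.sum_map]
  simp

/-- Vieta-style expansion of the generator. -/
lemma vieta (i : Fin h) :
    gp h n a i = ∑ k ∈ Finset.range (n i + 2), chern h n a i k * X i ^ (n i + 1 - k) := by
  have hcard : (Finset.univ : Finset (Fin (n i))).card = n i := by simp
  rw [gp, Finset.prod_add]
  have step1 : ∀ t ∈ (Finset.univ : Finset (Fin (n i))).powerset,
      (∏ j ∈ t, (∑ k' : Fin h, C (a i j k') * X k')) * ∏ j ∈ Finset.univ \ t, X i
      = (∏ j ∈ t, (∑ k' : Fin h, C (a i j k') * X k')) * X i ^ (n i - t.card) := by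
    intro t ht
    rw [Finset.prod_const, Finset.card_sdiff_of_subset (Finset.mem_powerset.mp ht), hcard]
  rw [Finset.sum_congr rfl step1, Finset.sum_powerset, hcard]
  have inner : ∀ k ∈ Finset.range (n i + 1),
      (∑ t ∈ Finset.powersetCard k (Finset.univ : Finset (Fin (n i))),
        (∏ j ∈ t, (∑ k' : Fin h, C (a i j k') * X k')) * X i ^ (n i - t.card))
      = chern h n a i k * X i ^ (n i - k) := by
    intro k hk
    have hcardsum : ∀ t ∈ Finset.powersetCard k (Finset.univ : Finset (Fin (n i))),
        (∏ j ∈ t, (∑ k' : Fin h, C (a i j k') * X k')) * X i ^ (n i - t.card)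
        = (∏ j ∈ t, (∑ k' : Fin h, C (a i j k') * X k')) * X i ^ (n i - k) := by
      intro t ht
      rw [(Finset.mem_powersetCard.mp ht).2]
    rw [Finset.sum_congr rfl hcardsum, ← Finset.sum_mul, ← chern]
  rw [Finset.sum_congr rfl inner, Finset.mul_sum]
  rw [Finset.sum_range_succ (fun k => chern h n a i k * X i ^ (n i + 1 - k)), chern_top,
    zero_mul, add_zero]
  refine Finset.sum_congr rfl fun k hk => ?_
  have hk' : k ≤ n i := by simpa [Nat.lt_succ_iff] using hk
  rw [← mul_assoc, mul_comm (X i) (chern h n a i k), mul_assoc, ← pow_succ']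
  congr 2
  omega


/-- `D i k`: the difference witnessing the Chern relation. -/
noncomputable def Dp (i : Fin h) (k : ℕ) : MvPolynomial (Fin h) ℚ :=
  C (((n i + 1).choose k : ℚ) * ((n i : ℚ) + 1)⁻¹ ^ k) * chern h n a i 1 ^ k
    - chern h n a i k

lemma Dp_zero (i : Fin h) : Dp h n a i 0 = 0 := by
  simp [Dp, chern_zero]

/-- the ideal generated by the `z_i^{n_i+1}`. -/
noncomputable def Kid : Ideal (MvPolynomial (Fin h) ℚ) :=
  Ideal.span (Set.range fun i : Fin h => Zp h n a i ^ (n i + 1))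

/-- binomial expansion of `z_i^{n_i+1}`. -/
lemma zpow_expand (i : Fin h) :
    Zp h n a i ^ (n i + 1) =
    ∑ k ∈ Finset.range (n i + 2),
      C (((n i + 1).choose k : ℚ) * ((n i : ℚ) + 1)⁻¹ ^ k) * chern h n a i 1 ^ k
        * X i ^ (n i + 1 - k) := by
  rw [Zp, add_comm (X i), add_pow]
  refine Finset.sum_congr rfl fun k hk => ?_
  rw [mul_pow, ← C_pow, map_mul, mul_comm (C (((n i + 1).choose k : ℚ)))]
  rw [show ((n i + 1).choose k : MvPolynomial (Fin h) ℚ) = C (((n i + 1).choose k : ℚ)) by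
    push_cast [map_natCast C]; ring]
  ring

/-- the key identity `z_i^{n_i+1} = g_i + ∑ D_{i,k} x_i^{n_i+1-k}`. -/
lemma keyA (i : Fin h) :
    Zp h n a i ^ (n i + 1) =
      gp h n a i + ∑ k ∈ Finset.range (n i + 2), Dp h n a i k * X i ^ (n i + 1 - k) := by
  rw [zpow_expand, vieta]
  simp only [Dp, sub_mul]
  rw [Finset.sum_sub_distrib]
  ring


/-- substitution killing all variables `≥ i`. -/
noncomputable def pip (i : Fin h) :
    MvPolynomial (Fin h) ℚ →ₐ[ℚ] MvPolynomial (Fin h) ℚ :=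
  aeval (fun l : Fin h => if (l : ℕ) < (i : ℕ) then (X l : MvPolynomial (Fin h) ℚ) else 0)

variable {h n a} (ha : ∀ i j k, ¬ k < i → a i j k = 0)
include ha

lemma pip_linear_fix {i l : Fin h} (hli : (l : ℕ) ≤ (i : ℕ)) (j : Fin (n l)) :
    pip h i (∑ k' : Fin h, C (a l j k') * X k') = ∑ k' : Fin h, C (a l j k') * X k' := by
  rw [map_sum]
  refine Finset.sum_congr rfl fun k' _ => ?_
  have pipC : ∀ r : ℚ, pip h i (C r) = C r := fun r => by
    rw [pip, aeval_C, algebraMap_eq]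
  rw [map_mul, pipC, pip]
  simp only [aeval_X]
  by_cases hk : (k' : ℕ) < (i : ℕ)
  · rw [if_pos hk]
  · have : a l j k' = 0 := ha l j k' (fun hlt => hk (lt_of_lt_of_le (Fin.lt_iff_val_lt_val.mp hlt) hli))
    simp [this]

lemma pip_chern (i : Fin h) (k : ℕ) :
    pip h i (chern h n a i k) = chern h n a i k := by
  rw [chern, map_sum]
  refine Finset.sum_congr rfl fun s _ => ?_
  rw [map_prod]
  exact Finset.prod_congr rfl fun j _ => pip_linear_fix ha le_rfl j

lemma pip_Dp (i : Fin h) (k : ℕ) :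
    pip h i (Dp h n a i k) = Dp h n a i k := by
  have pipC : ∀ r : ℚ, pip h i (C r) = C r := fun r => by
    rw [pip, aeval_C, algebraMap_eq]
  rw [Dp, map_sub, map_mul, map_pow, pipC, pip_chern ha, pip_chern ha]

lemma pip_gp (i l : Fin h) :
    pip h i (gp h n a l) = if (l : ℕ) < (i : ℕ) then gp h n a l else 0 := by
  by_cases hli : (l : ℕ) < (i : ℕ)
  · rw [if_pos hli, gp, map_mul, map_prod]
    have hXl : pip h i (X l) = X l := by
      rw [pip, aeval_X, if_pos hli]
    rw [hXl]
    congr 1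
    exact Finset.prod_congr rfl fun j _ => by
      rw [map_add, hXl, pip_linear_fix ha (le_of_lt hli) j]
  · rw [if_neg hli, gp, map_mul]
    have hXl : pip h i (X l) = 0 := by
      rw [pip, aeval_X, if_neg hli]
    rw [hXl, zero_mul]


lemma Dp_mem
    (hc : ∀ i : Fin h, ∀ k ∈ Finset.Icc 1 (n i + 1),
      Ideal.Quotient.mk (genBottIdeal h n a)
          (C (((n i : ℚ) + 1) ^ k) * chern h n a i k) =
        Ideal.Quotient.mk (genBottIdeal h n a)
          (C ((n i + 1).choose k : ℚ) * (chern h n a i 1) ^ k))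
    (i : Fin h) (k : ℕ) (hk : k ∈ Finset.range (n i + 2)) :
    Dp h n a i k ∈ genBottIdeal h n a := by
  rcases Nat.eq_zero_or_pos k with rfl | hk1
  · rw [Dp_zero]; exact zero_mem _
  have hk' : k ∈ Finset.Icc 1 (n i + 1) := by
    simp only [Finset.mem_range] at hk
    simp only [Finset.mem_Icc]
    omega
  have hmem : C (((n i : ℚ) + 1) ^ k) * chern h n a i k
      - C ((n i + 1).choose k : ℚ) * chern h n a i 1 ^ k ∈ genBottIdeal h n a :=
    Ideal.Quotient.eq.mp (hc i k hk')
  have hne : ((n i : ℚ) + 1) ≠ 0 := by positivity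
  have key : Dp h n a i k = (-C (((n i : ℚ) + 1)⁻¹ ^ k)) *
      (C (((n i : ℚ) + 1) ^ k) * chern h n a i k
        - C ((n i + 1).choose k : ℚ) * chern h n a i 1 ^ k) := by
    have h1 : ((n i : ℚ) + 1)⁻¹ ^ k * ((n i : ℚ) + 1) ^ k = 1 := by
      rw [← mul_pow, inv_mul_cancel₀ hne, one_pow]
    rw [Dp, neg_mul, mul_sub, neg_sub,
      ← mul_assoc (C (((n i : ℚ) + 1)⁻¹ ^ k)) (C (((n i : ℚ) + 1) ^ k)) (chern h n a i k),
      ← C_mul, h1, C_1, one_mul, ← mul_assoc, ← C_mul,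
      mul_comm ((((n i : ℚ) + 1))⁻¹ ^ k)]
  exact key ▸ Ideal.mul_mem_left _ _ hmem

omit ha in
lemma Zpow_mem
    (hD : ∀ (i : Fin h), ∀ k ∈ Finset.range (n i + 2), Dp h n a i k ∈ genBottIdeal h n a)
    (i : Fin h) : Zp h n a i ^ (n i + 1) ∈ genBottIdeal h n a := by
  rw [keyA]
  refine add_mem ?_ (Ideal.sum_mem _ fun k hk => Ideal.mul_mem_right _ _ (hD i k hk))
  rw [genBottIdeal_eq]
  exact Ideal.subset_span ⟨i, rfl⟩

lemma gp_mem
    (hD : ∀ (i : Fin h), ∀ k ∈ Finset.range (n i + 2), Dp h n a i k ∈ genBottIdeal h n a) :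
    ∀ i : Fin h, gp h n a i ∈ Kid h n a := by
  suffices H : ∀ m : ℕ, ∀ i : Fin h, (i : ℕ) < m → gp h n a i ∈ Kid h n a by
    intro i; exact H h i i.2
  intro m
  induction m with
  | zero => intro i hi; omega
  | succ m ih =>
    intro i hi
    have hZ : Zp h n a i ^ (n i + 1) ∈ Kid h n a := Ideal.subset_span ⟨i, rfl⟩
    have hsum : ∀ k ∈ Finset.range (n i + 2),
        Dp h n a i k * X i ^ (n i + 1 - k) ∈ Kid h n a := by
      intro k hk
      have h2 : pip h i (Dp h n a i k) ∈ Ideal.map (pip h i) (genBottIdeal h n a) :=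
        Ideal.mem_map_of_mem _ (hD i k hk)
      rw [pip_Dp ha] at h2
      have h3 : Ideal.map (pip h i) (genBottIdeal h n a) ≤ Kid h n a := by
        rw [genBottIdeal_eq, Ideal.map_span]
        apply Ideal.span_le.mpr
        rintro _ ⟨_, ⟨l, rfl⟩, rfl⟩
        show pip h i (gp h n a l) ∈ Kid h n a
        rw [pip_gp ha]
        by_cases hli : (l : ℕ) < (i : ℕ)
        · rw [if_pos hli]; exact ih l (by omega)
        · rw [if_neg hli]; exact zero_mem _
      exact Ideal.mul_mem_right _ _ (h3 h2)
    have hg : gp h n a i = Zp h n a i ^ (n i + 1)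
        - ∑ k ∈ Finset.range (n i + 2), Dp h n a i k * X i ^ (n i + 1 - k) := by
      rw [keyA]; ring
    rw [hg]
    exact sub_mem hZ (Ideal.sum_mem _ hsum)

lemma ideal_eq
    (hD : ∀ (i : Fin h), ∀ k ∈ Finset.range (n i + 2), Dp h n a i k ∈ genBottIdeal h n a) :
    genBottIdeal h n a = Kid h n a := by
  apply le_antisymm
  · rw [genBottIdeal_eq]
    apply Ideal.span_le.mpr
    rintro _ ⟨i, rfl⟩
    exact gp_mem ha hD i
  · apply Ideal.span_le.mpr
    rintro _ ⟨i, rfl⟩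
    exact Zpow_mem hD i

end aux

/-- the inverse triangular substitution. -/
noncomputable def Wp (h : ℕ) (n : Fin h → ℕ) (a : (i : Fin h) → Fin (n i) → Fin h → ℚ)
    (i : Fin h) : MvPolynomial (Fin h) ℚ :=
  X i - C (((n i : ℚ) + 1)⁻¹) *
    ∑ j : Fin (n i), ∑ k : Fin h,
      if hk : (k : ℕ) < (i : ℕ) then C (a i j k) * Wp h n a k else 0
termination_by (i : ℕ)
decreasing_by exact hk

section aux2

variable {h : ℕ} {n : Fin h → ℕ} {a : (i : Fin h) → Fin (n i) → Fin h → ℚ}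
variable (ha : ∀ i j k, ¬ k < i → a i j k = 0)
include ha

lemma aeval_Wp_Zp (i : Fin h) : aeval (Wp h n a) (Zp h n a i) = X i := by
  have hS : (aeval (Wp h n a)) (chern h n a i 1)
      = ∑ j : Fin (n i), ∑ k : Fin h,
          if hk : (k : ℕ) < (i : ℕ) then C (a i j k) * Wp h n a k else 0 := by
    rw [chern_one, map_sum]
    refine Finset.sum_congr rfl fun j _ => ?_
    rw [map_sum]
    refine Finset.sum_congr rfl fun k _ => ?_
    rw [map_mul, aeval_C, aeval_X, algebraMap_eq]
    by_cases hk : (k : ℕ) < (i : ℕ)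
    · rw [dif_pos hk]
    · rw [dif_neg hk, ha i j k (fun hlt => hk hlt), map_zero, zero_mul]
  rw [Zp, map_add, aeval_X, map_mul, aeval_C, algebraMap_eq, hS]
  conv_lhs => rw [Wp]
  ring

lemma aeval_Zp_Wp : ∀ i : Fin h, aeval (Zp h n a) (Wp h n a i) = X i := by
  suffices H : ∀ m : ℕ, ∀ i : Fin h, (i : ℕ) < m → aeval (Zp h n a) (Wp h n a i) = X i by
    intro i; exact H h i i.2
  intro m
  induction m with
  | zero => intro i hi; omega
  | succ m ih =>
    intro i hi
    conv_lhs => rw [Wp]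
    rw [map_sub, aeval_X, map_mul, aeval_C, algebraMap_eq, map_sum]
    have hS : ∑ j : Fin (n i), (aeval (Zp h n a))
        (∑ k : Fin h, if hk : (k : ℕ) < (i : ℕ) then C (a i j k) * Wp h n a k else 0)
        = chern h n a i 1 := by
      rw [chern_one]
      refine Finset.sum_congr rfl fun j _ => ?_
      rw [map_sum]
      refine Finset.sum_congr rfl fun k _ => ?_
      by_cases hk : (k : ℕ) < (i : ℕ)
      · rw [dif_pos hk, map_mul, aeval_C, algebraMap_eq, ih k (by omega)]
      · rw [dif_neg hk, map_zero, ha i j k (fun hlt => hk hlt), C_0, zero_mul]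
    rw [hS, Zp]
    ring

/-- the triangular change of variables as a ring equivalence, sending `z_i` to `x_i`. -/
noncomputable def fequiv : MvPolynomial (Fin h) ℚ ≃+* MvPolynomial (Fin h) ℚ :=
  RingEquiv.ofRingHom
    (aeval (Wp h n a) : MvPolynomial (Fin h) ℚ →ₐ[ℚ] MvPolynomial (Fin h) ℚ)
    (aeval (Zp h n a) : MvPolynomial (Fin h) ℚ →ₐ[ℚ] MvPolynomial (Fin h) ℚ)
    (h₂ := by
      apply MvPolynomial.ringHom_ext
      · intro r; simp [algebraMap_eq]
      · intro i
        simp only [RingHom.coe_comp, Function.comp_apply, AlgHom.toRingHom_eq_coe,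
          RingHom.coe_coe, aeval_X, RingHom.id_apply]
        exact aeval_Zp_Wp ha i)
    (h₁ := by
      apply MvPolynomial.ringHom_ext
      · intro r; simp [algebraMap_eq]
      · intro i
        simp only [RingHom.coe_comp, Function.comp_apply, AlgHom.toRingHom_eq_coe,
          RingHom.coe_coe, aeval_X, RingHom.id_apply]
        exact aeval_Wp_Zp ha i)

lemma fequiv_apply (p : MvPolynomial (Fin h) ℚ) : fequiv ha p = aeval (Wp h n a) p := rfl

lemma map_fequiv
    (hD : ∀ (i : Fin h), ∀ k ∈ Finset.range (n i + 2), Dp h n a i k ∈ genBottIdeal h n a) :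
    Ideal.map (fequiv ha : MvPolynomial (Fin h) ℚ ≃+* MvPolynomial (Fin h) ℚ)
      (genBottIdeal h n a)
    = Ideal.span (Set.range fun i : Fin h => (X i : MvPolynomial (Fin h) ℚ) ^ (n i + 1)) := by
  rw [ideal_eq ha hD, Kid, Ideal.map_span, ← Set.range_comp]
  congr 1
  apply congrArg
  funext i
  show fequiv ha (Zp h n a i ^ (n i + 1)) = X i ^ (n i + 1)
  rw [fequiv_apply, map_pow, aeval_Wp_Zp ha]

end aux2

/-- The "if" direction of Proposition 1: if the Chern class relations
`(n_i+1)^k c_k(ξ_i) = C(n_i+1,k) c_1(ξ_i)^k` hold for all `i` and `k = 1,…,n_i+1`, then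
the elements `z_i = x_i + c_1(ξ_i)/(n_i+1)` satisfy `z_i^{n_i+1} = 0` and the cohomology
ring is isomorphic to that of `∏ ℂP^{n_i}`, i.e. the manifold is `ℚ`-trivial. -/
theorem stmt_8 (h : ℕ) (n : Fin h → ℕ) (hn : ∀ i, 1 ≤ n i)
    (a : (i : Fin h) → Fin (n i) → Fin h → ℚ)
    (ha : ∀ i j k, ¬ k < i → a i j k = 0)
    (hc : ∀ i : Fin h, ∀ k ∈ Finset.Icc 1 (n i + 1),
      Ideal.Quotient.mk (genBottIdeal h n a)
          (C (((n i : ℚ) + 1) ^ k) * chern h n a i k) =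
        Ideal.Quotient.mk (genBottIdeal h n a)
          (C ((n i + 1).choose k : ℚ) * (chern h n a i 1) ^ k)) :
    (∀ i : Fin h,
        (Ideal.Quotient.mk (genBottIdeal h n a)
          (X i + C (((n i : ℚ) + 1))⁻¹ * chern h n a i 1)) ^ (n i + 1) = 0) ∧
      Nonempty ((MvPolynomial (Fin h) ℚ ⧸ genBottIdeal h n a) ≃+*
        (MvPolynomial (Fin h) ℚ ⧸
          Ideal.span (Set.range fun i : Fin h =>
            (X i : MvPolynomial (Fin h) ℚ) ^ (n i + 1)))) := by
  have hD : ∀ (i : Fin h), ∀ k ∈ Finset.range (n i + 2),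
      Dp h n a i k ∈ genBottIdeal h n a := fun i k hk => Dp_mem ha hc i k hk
  constructor
  · intro i
    rw [← map_pow, Ideal.Quotient.eq_zero_iff_mem]
    exact Zpow_mem hD i
  · exact ⟨Ideal.quotientEquiv (genBottIdeal h n a) _ (fequiv ha) (map_fequiv ha hD).symm⟩
end

section
/- In the ring R = ℚ[x_1,...,x_h]/⟨x_i ∏_{j=1}^{n_i}(∑_{k<i} a^i_{jk} x_k + x_i) : i = 1,...,h⟩, for any element z = ∑_{i=1}^h b_i x_i with b_i ≠ 0 for some fixed index i, the power z^{n_i} is nonzero in R. -/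
open MvPolynomial

/-- Lemma 5: if `z = ∑ b_j x_j` with `b_i ≠ 0`, then `z^{n_i} ≠ 0` in the cohomology ring. -/
theorem stmt_9 (h : ℕ) (n : Fin h → ℕ) (hn : ∀ i, 1 ≤ n i)
    (a : (i : Fin h) → Fin (n i) → Fin h → ℚ)
    (ha : ∀ i j k, ¬ k < i → a i j k = 0)
    (b : Fin h → ℚ) (i : Fin h) (hb : b i ≠ 0) :
    (Ideal.Quotient.mk (genBottIdeal h n a) (∑ j, C (b j) * X j)) ^ (n i) ≠ 0 := by
  classical
  set m := n i with hm
  set S := Polynomial ℚ ⧸ Ideal.span {(Polynomial.X : Polynomial ℚ) ^ (m + 1)} with hS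
  set y : S := Ideal.Quotient.mk _ Polynomial.X with hy
  have hym : y ^ m ≠ 0 := by
    intro h0
    rw [hy, ← map_pow, Ideal.Quotient.eq_zero_iff_mem, Ideal.mem_span_singleton] at h0
    have hX : (Polynomial.X : Polynomial ℚ) ^ m ≠ 0 := pow_ne_zero _ Polynomial.X_ne_zero
    have hdeg := Polynomial.natDegree_le_of_dvd h0 hX
    simp [Polynomial.natDegree_X_pow] at hdeg
  have hysucc : y ^ (m + 1) = 0 := by
    rw [hy, ← map_pow, Ideal.Quotient.eq_zero_iff_mem]
    exact Ideal.mem_span_singleton_self _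
  set φ : MvPolynomial (Fin h) ℚ →ₐ[ℚ] S := aeval (fun k => if k = i then y else 0) with hφ
  have hker : genBottIdeal h n a ≤ RingHom.ker φ.toRingHom := by
    rw [genBottIdeal, Ideal.span_le]
    rintro _ ⟨t, rfl⟩
    simp only [SetLike.mem_coe, RingHom.mem_ker, AlgHom.toRingHom_eq_coe,
      RingHom.coe_coe]
    by_cases ht : t = i
    · have hx : φ (X t) = y := by simp [hφ, ht]
      rw [map_mul, map_prod]
      have hterm : ∀ j : Fin (n t), φ ((∑ k : Fin h, C (a t j k) * X k) + X t) = y := by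
        intro j
        rw [map_add, map_sum, hx]
        have hz : ∀ k ∈ Finset.univ, φ (C (a t j k) * X k) = 0 := by
          intro k _
          by_cases hk : k = t
          · have h0 : a t j k = 0 := ha t j k (by simp [hk])
            simp [h0]
          · have hki : k ≠ i := fun hc => hk (hc.trans ht.symm)
            simp [hφ, hki]
        rw [Finset.sum_eq_zero hz, zero_add]
      rw [Finset.prod_congr rfl (fun j _ => hterm j), hx, Finset.prod_const,
        Finset.card_univ, Fintype.card_fin, ht, ← hm]
      rw [← pow_succ']
      exact hysucc
    · have hx : φ (X t) = 0 := by simp [hφ, ht]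
      rw [map_mul, hx, zero_mul]
  intro hcon
  rw [← map_pow, Ideal.Quotient.eq_zero_iff_mem] at hcon
  have h0 : φ ((∑ j, C (b j) * X j) ^ m) = 0 := hker hcon
  rw [map_pow, map_sum] at h0
  have hsum : ∑ j : Fin h, φ (C (b j) * X j) = algebraMap ℚ S (b i) * y := by
    rw [Finset.sum_eq_single i]
    · simp [hφ]
    · intro j _ hj
      simp [hφ, hj]
    · intro hmem
      exact absurd (Finset.mem_univ i) hmem
  rw [hsum, mul_pow, ← map_pow] at h0
  have hunit : IsUnit (algebraMap ℚ S (b i ^ m)) :=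
    (isUnit_iff_ne_zero.mpr (pow_ne_zero _ hb)).map (algebraMap ℚ S)
  exact hym ((hunit.mul_right_eq_zero).mp h0)
end

section
/- Let n ≥ 2 and let a_1,...,a_n be integers with e_2 := ∑_{k<ℓ} a_k a_ℓ and s := ∑_k a_k satisfying (n+1)² e_2 = (n(n+1)/2) s². Then a_1 = ... = a_n = 0. -/
theorem stmt_14 (n : ℕ) (hn : 2 ≤ n) (a : Fin n → ℤ)
    (h : ((n : ℤ) + 1) ^ 2 * (∑ k, ∑ l ∈ Finset.Ioi k, a k * a l) =
      ((n : ℤ) * ((n : ℤ) + 1) / 2) * (∑ k, a k) ^ 2) :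
    ∀ i, a i = 0 := by
  set s : ℤ := ∑ k, a k with hs
  set q : ℤ := ∑ k, a k ^ 2 with hq
  set e : ℤ := ∑ k, ∑ l ∈ Finset.Ioi k, a k * a l with he
  -- identity: s^2 = q + 2*e
  have key : s ^ 2 = q + 2 * e := by
    have h1 : ∑ i, ∑ j ∈ Finset.Ioi i, (a j * a i + a i * a j) =
        ∑ i, ∑ j ∈ ({i}ᶜ : Finset (Fin n)), a j * a i := by
      have := Finset.sum_sum_Ioi_add_eq_sum_sum_off_diag (fun j i => a j * a i)
      convert this using 3 <;> ext <;> simp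
    have h2 : ∑ i, ∑ j ∈ Finset.Ioi i, (a j * a i + a i * a j) = 2 * e := by
      rw [he, Finset.mul_sum]
      refine Finset.sum_congr rfl fun i _ => ?_
      rw [Finset.mul_sum]
      refine Finset.sum_congr rfl fun j _ => ?_
      ring
    have h3 : s ^ 2 = q + ∑ i, ∑ j ∈ ({i}ᶜ : Finset (Fin n)), a j * a i := by
      rw [sq, hs, Finset.sum_mul_sum, hq, ← Finset.sum_add_distrib]
      refine Finset.sum_congr rfl fun i _ => ?_
      have h4 : (∑ j ∈ ({i}ᶜ : Finset (Fin n)), a i * a j) + ∑ j ∈ ({i} : Finset (Fin n)), a i * a j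
          = ∑ j, a i * a j := Finset.sum_compl_add_sum _ _
      rw [← h4, Finset.sum_singleton]
      have : ∑ j ∈ ({i}ᶜ : Finset (Fin n)), a j * a i = ∑ j ∈ ({i}ᶜ : Finset (Fin n)), a i * a j :=
        Finset.sum_congr rfl fun j _ => mul_comm _ _
      rw [this]; ring
    rw [h3, ← h1, h2]
  -- clear the division in h
  have heven : (2 : ℤ) * ((n : ℤ) * ((n : ℤ) + 1) / 2) = (n : ℤ) * ((n : ℤ) + 1) := by
    have : Even ((n : ℤ) * ((n : ℤ) + 1)) := Int.even_mul_succ_self _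
    obtain ⟨m, hm⟩ := this
    omega
  have h' : 2 * (((n : ℤ) + 1) ^ 2 * e) = (n : ℤ) * ((n : ℤ) + 1) * s ^ 2 := by
    rw [h, ← mul_assoc, heven]
  -- substitute 2*e = s^2 - q
  have h2e : 2 * e = s ^ 2 - q := by omega
  have hmain : ((n : ℤ) + 1) ^ 2 * (s ^ 2 - q) = (n : ℤ) * ((n : ℤ) + 1) * s ^ 2 := by
    rw [← h2e]; linarith [h']
  have hnpos : (0 : ℤ) < (n : ℤ) + 1 := by positivity
  have hcancel : ((n : ℤ) + 1) * (s ^ 2 - q) = (n : ℤ) * s ^ 2 := by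
    have : ((n : ℤ) + 1) * (((n : ℤ) + 1) * (s ^ 2 - q)) = ((n : ℤ) + 1) * ((n : ℤ) * s ^ 2) := by
      ring_nf; ring_nf at hmain; linarith [hmain]
    exact mul_left_cancel₀ (ne_of_gt hnpos) this
  have hsq : s ^ 2 = ((n : ℤ) + 1) * q := by linarith [hcancel]
  -- Cauchy-Schwarz
  have hcs : s ^ 2 ≤ (n : ℤ) * q := by
    have := sq_sum_le_card_mul_sum_sq (s := (Finset.univ : Finset (Fin n))) (f := a)
    simpa [hs, hq] using this
  have hq0 : q ≤ 0 := by nlinarith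
  have hq0' : 0 ≤ q := Finset.sum_nonneg fun i _ => sq_nonneg _
  have hqz : q = 0 := le_antisymm hq0 hq0'
  intro i
  have := (Finset.sum_eq_zero_iff_of_nonneg (fun j _ => sq_nonneg (a j))).mp hqz i (Finset.mem_univ i)
  exact pow_eq_zero_iff (n := 2) (by norm_num) |>.mp this
end

section
/- In the ring R = ℚ[x_1,...,x_h]/⟨x_i ∏_{j=1}^{n_i}(∑_{k<i} a^i_{jk}x_k + x_i)⟩, suppose z = ∑_j b_j x_j satisfies z^{N+1} = 0 where N = min_i n_i. Then b_j = 0 for every index j with n_j > N. -/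
open MvPolynomial

/-- If `z = ∑ b_j x_j` satisfies `z^{N+1} = 0` where `N = min_i n_i`, then `b_j = 0`
for every `j` with `n_j > N`. -/
theorem stmt_18 (h : ℕ) (hh : 0 < h) (n : Fin h → ℕ) (hn : ∀ i, 1 ≤ n i)
    (a : (i : Fin h) → Fin (n i) → Fin h → ℚ)
    (ha : ∀ i j k, ¬ k < i → a i j k = 0)
    (b : Fin h → ℚ)
    (N : ℕ) (hN : N = Finset.univ.inf' (@Finset.univ_nonempty _ _ (Fin.pos_iff_nonempty.mp hh)) n)
    (hz : (Ideal.Quotient.mk (genBottIdeal h n a) (∑ j, C (b j) * X j)) ^ (N + 1) = 0) :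
    ∀ j, N < n j → b j = 0 := by
  intro j hj
  by_contra hb
  set M := n j + 1 with hM
  set I : Ideal (Polynomial ℚ) := Ideal.span {Polynomial.X ^ M} with hI
  set t : Polynomial ℚ ⧸ I := Ideal.Quotient.mk I Polynomial.X with ht
  set φ : MvPolynomial (Fin h) ℚ →ₐ[ℚ] Polynomial ℚ ⧸ I :=
    aeval (fun k : Fin h => if k = j then t else 0) with hφ
  have hgen : ∀ q ∈ genBottIdeal h n a, φ q = 0 := by
    intro q hq
    refine Submodule.span_induction ?_ (map_zero φ)
      (fun x y _ _ hx hy => by rw [map_add, hx, hy, add_zero])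
      (fun r x _ hx => by rw [smul_eq_mul, map_mul, hx, mul_zero]) hq
    rintro _ ⟨i, rfl⟩
    by_cases hij : i = j
    · subst hij
      have hfac : ∀ m : Fin (n i),
          φ ((∑ k : Fin h, C (a i m k) * X k) + X i) = t := by
        intro m
        simp only [hφ, map_add, map_sum, map_mul, aeval_X, aeval_C]
        rw [Finset.sum_eq_single i]
        · simp [ha i m i (lt_irrefl i)]
        · intro k _ hk; simp [if_neg hk]
        · simp
      rw [map_mul, map_prod]
      simp only [hfac]
      rw [hφ, aeval_X, if_pos rfl, ht, Finset.prod_const, Finset.card_univ,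
        Fintype.card_fin, ← map_pow, ← map_mul, ← pow_succ']
      exact Ideal.Quotient.eq_zero_iff_mem.mpr (Ideal.subset_span rfl)
    · rw [map_mul, hφ, aeval_X, if_neg hij, zero_mul]
  have hmem : (∑ k, C (b k) * X k) ^ (N + 1) ∈ genBottIdeal h n a := by
    rw [← map_pow] at hz
    exact Ideal.Quotient.eq_zero_iff_mem.mp hz
  have h0 : (φ (∑ k, C (b k) * X k)) ^ (N + 1) = 0 := by
    rw [← map_pow]; exact hgen _ hmem
  have hφz : φ (∑ k, C (b k) * X k) = algebraMap ℚ _ (b j) * t := by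
    simp only [hφ, map_sum, map_mul, aeval_X, aeval_C, mul_ite, mul_zero]
    rw [Finset.sum_ite_eq' Finset.univ j fun k => algebraMap ℚ _ (b k) * t]
    simp
  rw [hφz, mul_pow, ← map_pow] at h0
  have hmem2 : (Polynomial.C (b j ^ (N + 1)) * Polynomial.X ^ (N + 1)) ∈ I := by
    rw [← Ideal.Quotient.eq_zero_iff_mem]
    have : algebraMap ℚ (Polynomial ℚ ⧸ I) (b j ^ (N + 1)) =
        Ideal.Quotient.mk I (Polynomial.C (b j ^ (N + 1))) := by
      rw [IsScalarTower.algebraMap_apply ℚ (Polynomial ℚ) (Polynomial ℚ ⧸ I)]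
      simp [Ideal.Quotient.algebraMap_eq, Polynomial.algebraMap_eq]
    rw [map_mul, ← this,
      show Ideal.Quotient.mk I (Polynomial.X ^ (N + 1)) = t ^ (N + 1) from by rw [ht, map_pow]]
    exact h0
  rw [hI, Ideal.mem_span_singleton] at hmem2
  have hne : Polynomial.C (b j ^ (N + 1)) * Polynomial.X ^ (N + 1) ≠ 0 := by
    simp [pow_ne_zero, hb]
  have hdeg := Polynomial.natDegree_le_of_dvd hmem2 hne
  rw [Polynomial.natDegree_X_pow, Polynomial.natDegree_C_mul (pow_ne_zero _ hb),
    Polynomial.natDegree_X_pow] at hdeg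
  omega
end
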